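/- Let 𝒞 be a finitely complete category in which strong epimorphisms are stable under pullback and in which every object has only finitely many subobjects. For objects X and Y of 𝒞, write X ⪯ Y if there exist an object W, a monomorphism W → Y and a strong epimorphism W → X. Then the relation ⪯ is reflexive and transitive, and if both X ⪯ Y and Y ⪯ X hold, then X and Y are isomorphic; consequently ⪯ induces a partial order on the set of isomorphism classes of objects of 𝒞. -/

import Mathlib

open CategoryTheory Limits

/-- `Subquot X Y` means that `X` is a subquotient of `Y`: there are an object `W`,
a monomorphism `W ⟶ Y` and a strong epimorphism `W ⟶ X`. -/
def Subquot {𝒞 : Type*} [Category 𝒞] (X Y : 𝒞) : Prop :=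
  ∃ (W : 𝒞) (m : W ⟶ Y) (e : W ⟶ X), Mono m ∧ StrongEpi e

section Aux

variable {𝒞 : Type*} [Category 𝒞] [HasFiniteLimits 𝒞]

/-- If an object admits a mono and a strong epi from the same source, the mono is iso. -/
lemma aux_mono_iso
    (hstab : ∀ ⦃W X Y Z : 𝒞⦄ (fst : W ⟶ X) (snd : W ⟶ Y) (f : X ⟶ Z) (g : Y ⟶ Z),
      IsPullback fst snd f g → StrongEpi g → StrongEpi fst)
    (hfin : ∀ X : 𝒞, Finite (Subobject X))
    {W X : 𝒞} (m : W ⟶ X) (e : W ⟶ X) [Mono m] [StrongEpi e] : IsIso m := by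
  haveI := hfin X
  -- the endomap of `Subobject X` : pull back along `e`, push forward along `m`
  let φ : Subobject X → Subobject X := fun S =>
    Subobject.mk (pullback.snd S.arrow e ≫ m)
  -- φ reflects order
  have hrefl : ∀ S T : Subobject X, φ S ≤ φ T → S ≤ T := by
    intro S T h
    let k := Subobject.ofMkLEMk _ _ h
    have hk : k ≫ (pullback.snd T.arrow e ≫ m) = pullback.snd S.arrow e ≫ m :=
      Subobject.ofMkLEMk_comp h
    have hk' : k ≫ pullback.snd T.arrow e = pullback.snd S.arrow e := by
      rw [← cancel_mono m, Category.assoc]; exact hk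
    -- the first projection of the pullback of `S.arrow` and `e` is a strong epi
    haveI hSE : StrongEpi (pullback.fst S.arrow e) :=
      hstab _ _ _ _ (IsPullback.of_hasPullback S.arrow e) inferInstance
    have sq : CommSq (k ≫ pullback.fst T.arrow e) (pullback.fst S.arrow e) T.arrow S.arrow := by
      constructor
      rw [Category.assoc, pullback.condition, ← Category.assoc, hk', pullback.condition]
    haveI : HasLiftingProperty (pullback.fst S.arrow e) T.arrow := StrongEpi.llp T.arrow
    exact Subobject.le_of_comm sq.lift sq.fac_right
  have hinj : Function.Injective φ := fun S T h =>
    le_antisymm (hrefl S T h.le) (hrefl T S h.ge)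
  obtain ⟨S, hS⟩ := Finite.surjective_of_injective hinj ⊤
  have : IsIso (pullback.snd S.arrow e ≫ m) := by
    rw [Subobject.isIso_iff_mk_eq_top]; exact hS
  -- hence `m` is a split epi, and a mono, so an iso
  haveI : IsSplitEpi m :=
    ⟨⟨⟨inv (pullback.snd S.arrow e ≫ m) ≫ pullback.snd S.arrow e, by simp⟩⟩⟩
  exact isIso_of_mono_of_isSplitEpi m

/-- powers of an endomorphism -/
private def pw {X : 𝒞} (h : X ⟶ X) : ℕ → (X ⟶ X)
  | 0 => 𝟙 X
  | n + 1 => pw h n ≫ h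

private lemma pw_strongEpi {X : 𝒞} (h : X ⟶ X) [StrongEpi h] (n : ℕ) : StrongEpi (pw h n) := by
  induction n with
  | zero => show StrongEpi (𝟙 X); exact strongEpi_of_isIso _
  | succ n ih => show StrongEpi (pw h n ≫ h); exact @strongEpi_comp _ _ _ _ _ _ _ ih ‹_›

/-- A strong epi endomorphism is an isomorphism. -/
lemma aux_strongEpi_endo_isIso
    (hstab : ∀ ⦃W X Y Z : 𝒞⦄ (fst : W ⟶ X) (snd : W ⟶ Y) (f : X ⟶ Z) (g : Y ⟶ Z),
      IsPullback fst snd f g → StrongEpi g → StrongEpi fst)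
    (hfin : ∀ X : 𝒞, Finite (Subobject X))
    {X : 𝒞} (h : X ⟶ X) [StrongEpi h] : IsIso h := by
  haveI := hfin (X ⨯ X)
  -- kernel pairs of powers of h, as subobjects of X ⨯ X
  let k : ∀ n : ℕ, pullback (pw h n) (pw h n) ⟶ X ⨯ X := fun n =>
    prod.lift (pullback.fst _ _) (pullback.snd _ _)
  haveI hkm : ∀ n, Mono (k n) := by
    intro n
    constructor
    intro T u v huv
    apply pullback.hom_ext
    · have := huv =≫ prod.fst; simpa [k, prod.lift_fst] using this
    · have := huv =≫ prod.snd; simpa [k, prod.lift_snd] using this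
  let S : ℕ → Subobject (X ⨯ X) := fun n => Subobject.mk (k n)
  have hmono : ∀ n, S n ≤ S (n + 1) := by
    intro n
    refine Subobject.mk_le_mk_of_comm
      (pullback.lift (pullback.fst _ _) (pullback.snd _ _) ?_) ?_
    · show pullback.fst _ _ ≫ pw h n ≫ h = pullback.snd _ _ ≫ pw h n ≫ h
      rw [← Category.assoc, pullback.condition, Category.assoc]
    · apply Limits.prod.hom_ext
      · simp only [k, Category.assoc]; erw [prod.lift_fst, prod.lift_fst]; exact pullback.lift_fst _ _ _
      · simp only [k, Category.assoc]; erw [prod.lift_snd, prod.lift_snd]; exact pullback.lift_snd _ _ _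
  have hmono' : Monotone S := monotone_nat_of_le_succ hmono
  -- find n with S (n+1) ≤ S n
  obtain ⟨a, b, hab, hSab⟩ := Finite.exists_ne_map_eq_of_infinite S
  have key : ∃ n : ℕ, S (n + 1) ≤ S n := by
    rcases Nat.lt_or_ge a b with hlt | hge
    · exact ⟨a, le_trans (hmono' hlt) hSab.ge⟩
    · have hlt : b < a := lt_of_le_of_ne hge (Ne.symm hab)
      exact ⟨b, le_trans (hmono' hlt) hSab.le⟩
  obtain ⟨n, hn⟩ := key
  -- the factorization K (n+1) ⟶ K n
  let i := Subobject.ofMkLEMk _ _ hn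
  have hi : i ≫ k n = k (n + 1) := Subobject.ofMkLEMk_comp hn
  have hi1 : i ≫ pullback.fst (pw h n) (pw h n) = pullback.fst (pw h (n+1)) (pw h (n+1)) := by
    have := hi =≫ prod.fst; simpa [k, prod.lift_fst] using this
  have hi2 : i ≫ pullback.snd (pw h n) (pw h n) = pullback.snd (pw h (n+1)) (pw h (n+1)) := by
    have := hi =≫ prod.snd; simpa [k, prod.lift_snd] using this
  have star : pullback.fst (pw h (n+1)) (pw h (n+1)) ≫ pw h n
      = pullback.snd (pw h (n+1)) (pw h (n+1)) ≫ pw h n := by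
    rw [← hi1, ← hi2, Category.assoc, Category.assoc, pullback.condition]
  haveI := pw_strongEpi h n
  haveI := pw_strongEpi h (n+1)
  -- now show h is mono
  haveI hm : Mono h := by
    constructor
    intro T u v huv
    -- pull back powers of h along u and along v
    let p := pullback.fst u (pw h n)
    let u₁ := pullback.snd u (pw h n)
    have hpu : p ≫ u = u₁ ≫ pw h n := pullback.condition
    haveI : StrongEpi p := hstab _ _ _ _ (IsPullback.of_hasPullback u (pw h n)) inferInstance
    let q := pullback.fst (p ≫ v) (pw h n)
    let v₁ := pullback.snd (p ≫ v) (pw h n)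
    have hqv : q ≫ p ≫ v = v₁ ≫ pw h n := by
      simpa using (pullback.condition : q ≫ (p ≫ v) = v₁ ≫ pw h n)
    haveI : StrongEpi q :=
      hstab _ _ _ _ (IsPullback.of_hasPullback (p ≫ v) (pw h n)) inferInstance
    -- the pair (q ≫ u₁, v₁) lands in the kernel pair of h^(n+1)
    have hw : (q ≫ u₁) ≫ pw h (n+1) = v₁ ≫ pw h (n+1) := by
      show (q ≫ u₁) ≫ pw h n ≫ h = v₁ ≫ pw h n ≫ h
      calc (q ≫ u₁) ≫ pw h n ≫ h = (q ≫ (u₁ ≫ pw h n)) ≫ h := by simp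
        _ = (q ≫ (p ≫ u)) ≫ h := by rw [hpu]
        _ = (q ≫ p) ≫ u ≫ h := by simp
        _ = (q ≫ p) ≫ v ≫ h := by rw [huv]
        _ = (q ≫ (p ≫ v)) ≫ h := by simp
        _ = (v₁ ≫ pw h n) ≫ h := by rw [hqv]
        _ = v₁ ≫ pw h n ≫ h := by simp
    let w := pullback.lift (q ≫ u₁) v₁ hw
    have hw1 : w ≫ pullback.fst (pw h (n+1)) (pw h (n+1)) = q ≫ u₁ := pullback.lift_fst _ _ _
    have hw2 : w ≫ pullback.snd (pw h (n+1)) (pw h (n+1)) = v₁ := pullback.lift_snd _ _ _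
    have : (q ≫ u₁) ≫ pw h n = v₁ ≫ pw h n := by
      rw [← hw1, ← hw2, Category.assoc, Category.assoc, star]
    have hfinal : (q ≫ p) ≫ u = (q ≫ p) ≫ v := by
      calc (q ≫ p) ≫ u = q ≫ u₁ ≫ pw h n := by rw [Category.assoc, hpu]
        _ = v₁ ≫ pw h n := by rw [← Category.assoc]; exact this
        _ = (q ≫ p) ≫ v := by rw [← hqv, Category.assoc]
    haveI : Epi (q ≫ p) := epi_comp _ _
    exact (cancel_epi (q ≫ p)).mp hfinal
  exact isIso_of_mono_of_strongEpi h

lemma subquot_refl (X : 𝒞) : Subquot X X :=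
  ⟨X, 𝟙 X, 𝟙 X, inferInstance, strongEpi_of_isIso _⟩

lemma subquot_trans
    (hstab : ∀ ⦃W X Y Z : 𝒞⦄ (fst : W ⟶ X) (snd : W ⟶ Y) (f : X ⟶ Z) (g : Y ⟶ Z),
      IsPullback fst snd f g → StrongEpi g → StrongEpi fst)
    (X Y Z : 𝒞) : Subquot X Y → Subquot Y Z → Subquot X Z := by
  rintro ⟨W₁, m₁, e₁, hm₁, he₁⟩ ⟨W₂, m₂, e₂, hm₂, he₂⟩
  haveI := hm₁; haveI := he₁; haveI := hm₂; haveI := he₂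
  -- pull back m₁ : W₁ ⟶ Y along e₂ : W₂ ⟶ Y
  let P := pullback m₁ e₂
  haveI : StrongEpi (pullback.fst m₁ e₂) :=
    hstab _ _ _ _ (IsPullback.of_hasPullback m₁ e₂) inferInstance
  haveI : Mono (pullback.snd m₁ e₂) := inferInstance
  exact ⟨P, pullback.snd m₁ e₂ ≫ m₂, pullback.fst m₁ e₂ ≫ e₁, mono_comp _ _,
    strongEpi_comp _ _⟩

lemma subquot_antisymm
    (hstab : ∀ ⦃W X Y Z : 𝒞⦄ (fst : W ⟶ X) (snd : W ⟶ Y) (f : X ⟶ Z) (g : Y ⟶ Z),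
      IsPullback fst snd f g → StrongEpi g → StrongEpi fst)
    (hfin : ∀ X : 𝒞, Finite (Subobject X))
    (X Y : 𝒞) : Subquot X Y → Subquot Y X → Nonempty (X ≅ Y) := by
  rintro ⟨W₁, m₁, e₁, hm₁, he₁⟩ ⟨W₂, m₂, e₂, hm₂, he₂⟩
  haveI := hm₁; haveI := he₁; haveI := hm₂; haveI := he₂
  -- pull back m₁ along e₂ : gives Subquot X X
  haveI : StrongEpi (pullback.fst m₁ e₂) :=
    hstab _ _ _ _ (IsPullback.of_hasPullback m₁ e₂) inferInstance
  haveI : Mono (pullback.snd m₁ e₂ ≫ m₂) := mono_comp _ _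
  haveI : StrongEpi (pullback.fst m₁ e₂ ≫ e₁) := strongEpi_comp _ _
  haveI h1 : IsIso (pullback.snd m₁ e₂ ≫ m₂) :=
    aux_mono_iso hstab hfin (pullback.snd m₁ e₂ ≫ m₂) (pullback.fst m₁ e₂ ≫ e₁)
  haveI : IsSplitEpi m₂ := ⟨⟨⟨inv (pullback.snd m₁ e₂ ≫ m₂) ≫ pullback.snd m₁ e₂, by simp⟩⟩⟩
  haveI hm₂iso : IsIso m₂ := isIso_of_mono_of_isSplitEpi m₂
  -- symmetrically, pull back m₂ along e₁ : gives Subquot Y Y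
  haveI : StrongEpi (pullback.fst m₂ e₁) :=
    hstab _ _ _ _ (IsPullback.of_hasPullback m₂ e₁) inferInstance
  haveI : Mono (pullback.snd m₂ e₁ ≫ m₁) := mono_comp _ _
  haveI : StrongEpi (pullback.fst m₂ e₁ ≫ e₂) := strongEpi_comp _ _
  haveI h2 : IsIso (pullback.snd m₂ e₁ ≫ m₁) :=
    aux_mono_iso hstab hfin (pullback.snd m₂ e₁ ≫ m₁) (pullback.fst m₂ e₁ ≫ e₂)
  haveI : IsSplitEpi m₁ := ⟨⟨⟨inv (pullback.snd m₂ e₁ ≫ m₁) ≫ pullback.snd m₂ e₁, by simp⟩⟩⟩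
  haveI hm₁iso : IsIso m₁ := isIso_of_mono_of_isSplitEpi m₁
  -- so we get strong epis f : Y ⟶ X and g : X ⟶ Y
  let f : Y ⟶ X := inv m₁ ≫ e₁
  let g : X ⟶ Y := inv m₂ ≫ e₂
  haveI : StrongEpi f := strongEpi_comp _ _
  haveI : StrongEpi g := strongEpi_comp _ _
  haveI : StrongEpi (g ≫ f) := strongEpi_comp _ _
  haveI : StrongEpi (f ≫ g) := strongEpi_comp _ _
  haveI : IsIso (g ≫ f) := aux_strongEpi_endo_isIso hstab hfin (g ≫ f)
  haveI : IsIso (f ≫ g) := aux_strongEpi_endo_isIso hstab hfin (f ≫ g)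
  haveI : Mono g := by
    haveI : IsSplitMono g := ⟨⟨⟨f ≫ inv (g ≫ f), by rw [← Category.assoc, IsIso.hom_inv_id]⟩⟩⟩
    infer_instance
  haveI : IsIso g := by
    haveI : IsSplitEpi g := ⟨⟨⟨inv (f ≫ g) ≫ f, by simp⟩⟩⟩
    exact isIso_of_mono_of_isSplitEpi g
  exact ⟨asIso g⟩

end Aux

/-- In a finitely complete category in which strong epimorphisms are
stable under pullback and every object has only finitely many subobjects, the subquotient
relation `⪯` is reflexive and transitive, two objects that are subquotients of each other
are isomorphic, and consequently `⪯` induces a partial order on the set of isomorphism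
classes of objects. -/
theorem stmt4 {𝒞 : Type*} [Category 𝒞] [HasFiniteLimits 𝒞]
    (hstab : ∀ ⦃W X Y Z : 𝒞⦄ (fst : W ⟶ X) (snd : W ⟶ Y) (f : X ⟶ Z) (g : Y ⟶ Z),
      IsPullback fst snd f g → StrongEpi g → StrongEpi fst)
    (hfin : ∀ X : 𝒞, Finite (Subobject X)) :
    (∀ X : 𝒞, Subquot X X) ∧
    (∀ X Y Z : 𝒞, Subquot X Y → Subquot Y Z → Subquot X Z) ∧
    (∀ X Y : 𝒞, Subquot X Y → Subquot Y X → Nonempty (X ≅ Y)) ∧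
    ∃ le : Quotient (isIsomorphicSetoid 𝒞) → Quotient (isIsomorphicSetoid 𝒞) → Prop,
      (∀ X Y : 𝒞, le (Quotient.mk (isIsomorphicSetoid 𝒞) X)
          (Quotient.mk (isIsomorphicSetoid 𝒞) Y) ↔ Subquot X Y) ∧
      IsPartialOrder (Quotient (isIsomorphicSetoid 𝒞)) le := by
  have hiso : ∀ (X X' Y Y' : 𝒞), (X ≅ X') → (Y ≅ Y') → Subquot X Y → Subquot X' Y' := by
    rintro X X' Y Y' eX eY ⟨W, m, e, hm, he⟩
    haveI := hm; haveI := he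
    exact ⟨W, m ≫ eY.hom, e ≫ eX.hom, mono_comp _ _, strongEpi_comp _ _⟩
  refine ⟨subquot_refl, subquot_trans hstab, subquot_antisymm hstab hfin, ?_⟩
  refine ⟨fun a b => Quotient.liftOn₂ a b Subquot ?_, fun X Y => Iff.rfl,
    { refl := ?_, trans := ?_, antisymm := ?_ }⟩
  · rintro X Y X' Y' ⟨eX⟩ ⟨eY⟩
    exact propext ⟨hiso X X' Y Y' eX eY, hiso X' X Y' Y eX.symm eY.symm⟩
  · intro a
    induction a using Quotient.inductionOn with
    | h X => exact subquot_refl X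
  · intro a b c
    induction a using Quotient.inductionOn with
    | h X =>
      induction b using Quotient.inductionOn with
      | h Y =>
        induction c using Quotient.inductionOn with
        | h Z => exact subquot_trans hstab X Y Z
  · intro a b
    induction a using Quotient.inductionOn with
    | h X =>
      induction b using Quotient.inductionOn with
      | h Y =>
        intro h1 h2
        exact Quotient.sound (subquot_antisymm hstab hfin X Y h1 h2)
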